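/- Let d ≥ 2, n ≥ 2, let ω : ℝ → ℝ^d be C², let k_2, …, k_n ∈ ℤ^{d−1}, and let φ_2, …, φ_n : I → ℝ be C² on an open interval I ⊆ ℝ such that ⟨ω̃(s), k_j⟩ ≠ 0 for all s ∈ I and 2 ≤ j ≤ n, where ω̃(s) = (ω_1(s), …, ω_{d−1}(s)). Define H_n(θ, r) = ⟨ω(r_d), r⟩ − Σ_{j=2}^n φ_j(r_d) sin(2π⟨k_j, θ̃⟩), H_0(θ, r) = ⟨ω(r_d), r⟩, and the map Ψ_n(θ, r) = (θ̃, θ_d − (1/2π) Σ_{j=2}^n (d/ds)[φ_j(s)/⟨ω̃(s), k_j⟩] cos(2π⟨k_j, θ̃⟩), r̃ − Σ_{j=2}^n (φ_j(s)/⟨ω̃(s), k_j⟩) sin(2π⟨k_j, θ̃⟩) · k_j, s), where s = r_d. Then on ℝ^d × ℝ^{d−1} × I: (a) H_n(θ, r) = H_0(Ψ_n(θ, r)) for all (θ, r), and (b) the Jacobian matrix of Ψ_n at every point belongs to the symplectic group Sp(2d, ℝ). -/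

import Mathlib

open Real Filter Set

noncomputable section

/-- The phase space `T^d × ℝ^d`, realized as pairs `(θ, r)` of functions `Fin d → ℝ`. -/
abbrev Phase (d : ℕ) := (Fin d → ℝ) × (Fin d → ℝ)

/-- `H` is `ℤ^d`-periodic in the angle variable `θ`. -/
def PeriodicTheta {d : ℕ} (H : Phase d → ℝ) : Prop :=
  ∀ (θ r : Fin d → ℝ) (m : Fin d → ℤ), H (fun i => θ i + (m i : ℝ), r) = H (θ, r)

/-- `H` is real entire: it is the restriction to `ℝ^d × ℝ^d` of a holomorphic
function on `ℂ^d × ℂ^d`. -/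
def RealEntire {d : ℕ} (H : Phase d → ℝ) : Prop :=
  ∃ F : (Fin d → ℂ) × (Fin d → ℂ) → ℂ, Differentiable ℂ F ∧
    ∀ θ r : Fin d → ℝ, F (fun i => (θ i : ℂ), fun i => (r i : ℂ)) = H (θ, r)

/-- `H` is of the form `(*)` with frequency `ω`:
`|H(θ,r) − ⟨ω,r⟩| ≤ C‖r‖²` for all `θ` and all `‖r‖ ≤ δ`. -/
def FormStar {d : ℕ} (H : Phase d → ℝ) (ω : Fin d → ℝ) : Prop :=
  ∃ C δ : ℝ, 0 < C ∧ 0 < δ ∧ ∀ θ r : Fin d → ℝ, ‖r‖ ≤ δ →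
    |H (θ, r) - ∑ i, ω i * r i| ≤ C * ‖r‖ ^ 2

/-- `(θ, r)` is a solution of Hamilton's equations for `H` on the set `J`:
`θ' = ∂H/∂r`, `r' = −∂H/∂θ`. -/
def IsSolutionOn {d : ℕ} (H : Phase d → ℝ) (θ r : ℝ → Fin d → ℝ) (J : Set ℝ) : Prop :=
  ∀ t ∈ J, ∀ i : Fin d,
    HasDerivWithinAt (fun u => θ u i) (fderiv ℝ H (θ t, r t) (0, Pi.single i 1)) J t ∧
    HasDerivWithinAt (fun u => r u i) (-(fderiv ℝ H (θ t, r t) (Pi.single i 1, 0))) J t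

/-- The canonical symplectic form `Σ_i dθ_i ∧ dr_i` on `ℝ^d × ℝ^d`. -/
def SymplForm {d : ℕ} (u v : Phase d) : ℝ := ∑ i, (u.1 i * v.2 i - u.2 i * v.1 i)

/-- The Jacobian matrix of `Ψ` at `z` belongs to `Sp(2d, ℝ)`:
the derivative of `Ψ` at `z` preserves the canonical symplectic form. -/
def JacobianSymplecticAt {d : ℕ} (Ψ : Phase d → Phase d) (z : Phase d) : Prop :=
  ∀ u v : Phase d, SymplForm (fderiv ℝ Ψ z u) (fderiv ℝ Ψ z v) = SymplForm u v

/-- Embedding of the first `d − 1` indices into `Fin d`. -/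
def emb (d : ℕ) : Fin (d - 1) → Fin d := Fin.castLE (Nat.sub_le d 1)

/-- The last index of `Fin d`. -/
def lst (d : ℕ) (hd : 0 < d) : Fin d := ⟨d - 1, Nat.sub_lt hd Nat.one_pos⟩

/-- `⟨ω̃(s), k_j⟩ = Σ_{i=1}^{d−1} ω_i(s) k_{j,i}`. -/
def Aj (d : ℕ) (ω : ℝ → Fin d → ℝ) (k : ℕ → Fin (d - 1) → ℤ) (j : ℕ) (s : ℝ) : ℝ :=
  ∑ i, ω s (emb d i) * (k j i : ℝ)

/-- `H_n(θ, r) = ⟨ω(r_d), r⟩ − Σ_{j=2}^n φ_j(r_d) sin(2π⟨k_j, θ̃⟩)`. -/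
def Hn (d n : ℕ) (hd : 0 < d) (ω : ℝ → Fin d → ℝ) (k : ℕ → Fin (d - 1) → ℤ)
    (φ : ℕ → ℝ → ℝ) (z : Phase d) : ℝ :=
  (∑ i, ω (z.2 (lst d hd)) i * z.2 i) -
    ∑ j ∈ Finset.Icc 2 n, φ j (z.2 (lst d hd)) *
      Real.sin (2 * π * ∑ i, (k j i : ℝ) * z.1 (emb d i))

/-- `H_0(θ, r) = ⟨ω(r_d), r⟩`. -/
def H0 (d : ℕ) (hd : 0 < d) (ω : ℝ → Fin d → ℝ) (z : Phase d) : ℝ :=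
  ∑ i, ω (z.2 (lst d hd)) i * z.2 i

/-- The map `Ψ_n(θ, r) = (θ̃, θ_d − (1/2π) Σ_j (d/ds)[φ_j(s)/⟨ω̃(s), k_j⟩] cos(2π⟨k_j, θ̃⟩),
r̃ − Σ_j (φ_j(s)/⟨ω̃(s), k_j⟩) sin(2π⟨k_j, θ̃⟩) k_j, s)`, with `s = r_d`. -/
def Psin (d n : ℕ) (hd : 0 < d) (ω : ℝ → Fin d → ℝ) (k : ℕ → Fin (d - 1) → ℤ)
    (φ : ℕ → ℝ → ℝ) (z : Phase d) : Phase d :=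
  (fun i => if i = lst d hd then
      z.1 (lst d hd) - (1 / (2 * π)) * ∑ j ∈ Finset.Icc 2 n,
        deriv (fun s => φ j s / Aj d ω k j s) (z.2 (lst d hd)) *
          Real.cos (2 * π * ∑ i', (k j i' : ℝ) * z.1 (emb d i'))
    else z.1 i,
   fun i => if h : (i : ℕ) < d - 1 then
      z.2 i - ∑ j ∈ Finset.Icc 2 n,
        (φ j (z.2 (lst d hd)) / Aj d ω k j (z.2 (lst d hd))) *
          Real.sin (2 * π * ∑ i', (k j i' : ℝ) * z.1 (emb d i')) * (k j ⟨i, h⟩ : ℝ)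
    else z.2 i)


-- ===== auxiliary development =====

lemma sum_split (d : ℕ) (hd : 0 < d) (f : Fin d → ℝ) :
    ∑ i, f i = (∑ i : Fin (d-1), f (emb d i)) + f (lst d hd) := by
  obtain ⟨e, rfl⟩ : ∃ e, d = e + 1 := ⟨d - 1, by omega⟩
  rw [Fin.sum_univ_castSucc]
  rfl

lemma emb_ne_lst (d : ℕ) (hd : 0 < d) (i : Fin (d-1)) : emb d i ≠ lst d hd := by
  intro h
  have := congrArg Fin.val h
  simp [emb, lst] at this
  omega

lemma key_alg (e : ℕ) (m : Finset ℕ) (K : ℕ → Fin e → ℝ) (A B Cc : ℕ → ℝ)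
    (u1 u2 v1 v2 : Fin e → ℝ) (u1L u2L v1L v2L : ℝ) :
    (∑ i, (u1 i * (v2 i - ∑ j ∈ m, (A j * v2L + B j * (∑ i', K j i' * v1 i')) * K j i)
        - (u2 i - ∑ j ∈ m, (A j * u2L + B j * (∑ i', K j i' * u1 i')) * K j i) * v1 i))
    + ((u1L - (∑ j ∈ m, Cc j) * u2L + ∑ j ∈ m, A j * (∑ i', K j i' * u1 i')) * v2L
        - u2L * (v1L - (∑ j ∈ m, Cc j) * v2L + ∑ j ∈ m, A j * (∑ i', K j i' * v1 i')))
    = (∑ i, (u1 i * v2 i - u2 i * v1 i)) + (u1L * v2L - u2L * v1L) := by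
  have swap : ∀ (w : Fin e → ℝ) (X : ℕ → ℝ),
      ∑ i, (∑ j ∈ m, X j * K j i) * w i = ∑ j ∈ m, X j * ∑ i, K j i * w i := by
    intro w X
    calc ∑ i, (∑ j ∈ m, X j * K j i) * w i = ∑ i, ∑ j ∈ m, X j * (K j i * w i) := by
          simp [Finset.sum_mul, mul_assoc]
      _ = ∑ j ∈ m, ∑ i, X j * (K j i * w i) := Finset.sum_comm
      _ = ∑ j ∈ m, X j * ∑ i, K j i * w i := by simp [Finset.mul_sum]
  have expand : ∀ i, (u1 i * (v2 i - ∑ j ∈ m, (A j * v2L + B j * (∑ i', K j i' * v1 i')) * K j i)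
        - (u2 i - ∑ j ∈ m, (A j * u2L + B j * (∑ i', K j i' * u1 i')) * K j i) * v1 i)
      = (u1 i * v2 i - u2 i * v1 i)
        - (∑ j ∈ m, (A j * v2L + B j * (∑ i', K j i' * v1 i')) * K j i) * u1 i
        + (∑ j ∈ m, (A j * u2L + B j * (∑ i', K j i' * u1 i')) * K j i) * v1 i := by
    intro i; ring
  simp only [expand]
  rw [Finset.sum_add_distrib, Finset.sum_sub_distrib, swap, swap]
  have cancel : ∑ j ∈ m, (A j * u2L + B j * (∑ i', K j i' * u1 i')) * (∑ i, K j i * v1 i)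
      - ∑ j ∈ m, (A j * v2L + B j * (∑ i', K j i' * v1 i')) * (∑ i, K j i * u1 i)
      = u2L * (∑ j ∈ m, A j * (∑ i', K j i' * v1 i'))
        - v2L * (∑ j ∈ m, A j * (∑ i', K j i' * u1 i')) := by
    rw [← Finset.sum_sub_distrib, Finset.mul_sum, Finset.mul_sum, ← Finset.sum_sub_distrib]
    exact Finset.sum_congr rfl fun j _ => by ring
  set P := ∑ j ∈ m, A j * (∑ i', K j i' * u1 i')
  set Q := ∑ j ∈ m, A j * (∑ i', K j i' * v1 i')
  set SC := ∑ j ∈ m, Cc j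
  linarith [cancel]

def Pth (d : ℕ) (i : Fin d) : Phase d →L[ℝ] ℝ :=
  (ContinuousLinearMap.proj i).comp (ContinuousLinearMap.fst ℝ (Fin d → ℝ) (Fin d → ℝ))

def Prr (d : ℕ) (i : Fin d) : Phase d →L[ℝ] ℝ :=
  (ContinuousLinearMap.proj i).comp (ContinuousLinearMap.snd ℝ (Fin d → ℝ) (Fin d → ℝ))

def Kc (d : ℕ) (k : ℕ → Fin (d-1) → ℤ) (j : ℕ) : Phase d →L[ℝ] ℝ :=
  ∑ i', (k j i' : ℝ) • Pth d (emb d i')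

def gf (d : ℕ) (ω : ℝ → Fin d → ℝ) (k : ℕ → Fin (d - 1) → ℤ) (φ : ℕ → ℝ → ℝ) (j : ℕ) :
    ℝ → ℝ := fun s => φ j s / Aj d ω k j s

def cs (d : ℕ) (k : ℕ → Fin (d-1) → ℤ) (j : ℕ) (z : Phase d) : ℝ :=
  2 * π * ∑ i', (k j i' : ℝ) * z.1 (emb d i')

def DPsi (d n : ℕ) (hd : 0 < d) (ω : ℝ → Fin d → ℝ) (k : ℕ → Fin (d - 1) → ℤ)
    (φ : ℕ → ℝ → ℝ) (z : Phase d) : Phase d →L[ℝ] Phase d :=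
  (ContinuousLinearMap.pi fun i =>
    if i = lst d hd then
      Pth d (lst d hd) - (1/(2*π)) • ∑ j ∈ Finset.Icc 2 n,
        ((deriv (gf d ω k φ j) (z.2 (lst d hd))) • ((-Real.sin (cs d k j z)) • ((2*π) • Kc d k j))
         + Real.cos (cs d k j z) • ((deriv (deriv (gf d ω k φ j)) (z.2 (lst d hd))) • Prr d (lst d hd)))
    else Pth d i).prod
  (ContinuousLinearMap.pi fun i =>
    if h : (i : ℕ) < d - 1 then
      Prr d i - ∑ j ∈ Finset.Icc 2 n, (k j ⟨i, h⟩ : ℝ) •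
        ((gf d ω k φ j (z.2 (lst d hd))) • (Real.cos (cs d k j z) • ((2*π) • Kc d k j))
         + Real.sin (cs d k j z) • ((deriv (gf d ω k φ j) (z.2 (lst d hd))) • Prr d (lst d hd)))
    else Prr d i)

lemma contDiff_Aj (d : ℕ) (ω : ℝ → Fin d → ℝ) (hω : ContDiff ℝ 2 ω)
    (k : ℕ → Fin (d-1) → ℤ) (j : ℕ) : ContDiff ℝ 2 (Aj d ω k j) := by
  unfold Aj
  exact ContDiff.sum fun i _ =>
    (((ContinuousLinearMap.proj (emb d i) : (Fin d → ℝ) →L[ℝ] ℝ).contDiff).comp hω).mul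
      contDiff_const

lemma hasFDerivAt_Psin (d n : ℕ) (hd : 0 < d) (ω : ℝ → Fin d → ℝ) (hω : ContDiff ℝ 2 ω)
    (k : ℕ → Fin (d - 1) → ℤ) (I : Set ℝ) (hIopen : IsOpen I)
    (φ : ℕ → ℝ → ℝ) (hφ : ∀ j ∈ Finset.Icc 2 n, ContDiffOn ℝ 2 (φ j) I)
    (hres : ∀ s ∈ I, ∀ j ∈ Finset.Icc 2 n, Aj d ω k j s ≠ 0)
    (z : Phase d) (hz : z.2 (lst d hd) ∈ I) :
    HasFDerivAt (Psin d n hd ω k φ) (DPsi d n hd ω k φ z) z := by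
  set s₀ := z.2 (lst d hd) with hs₀
  have hgC : ∀ j ∈ Finset.Icc 2 n, ContDiffOn ℝ 2 (gf d ω k φ j) I := by
    intro j hj
    exact (hφ j hj).div ((contDiff_Aj d ω hω k j).contDiffOn) (fun x hx => hres x hx j hj)
  have hg1 : ∀ j ∈ Finset.Icc 2 n,
      HasDerivAt (gf d ω k φ j) (deriv (gf d ω k φ j) s₀) s₀ := by
    intro j hj
    exact (((hgC j hj s₀ hz).differentiableWithinAt (by norm_num)).differentiableAt
      (hIopen.mem_nhds hz)).hasDerivAt
  have hg2 : ∀ j ∈ Finset.Icc 2 n,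
      HasDerivAt (deriv (gf d ω k φ j)) (deriv (deriv (gf d ω k φ j)) s₀) s₀ := by
    intro j hj
    have h1 : ContDiffOn ℝ 1 (deriv (gf d ω k φ j)) I :=
      (hgC j hj).deriv_of_isOpen hIopen (by norm_num)
    exact (((h1 s₀ hz).differentiableWithinAt (by norm_num)).differentiableAt
      (hIopen.mem_nhds hz)).hasDerivAt
  have hKc : ∀ j, HasFDerivAt (fun z : Phase d => ∑ i', (k j i' : ℝ) * z.1 (emb d i'))
      (Kc d k j) z := by
    intro j
    exact HasFDerivAt.fun_sum fun i' _ => (Pth d (emb d i')).hasFDerivAt.const_mul _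
  have hcs : ∀ j, HasFDerivAt (cs d k j) ((2*π) • Kc d k j) z := fun j => (hKc j).const_mul _
  have hPrrL : HasFDerivAt (fun z : Phase d => z.2 (lst d hd)) (Prr d (lst d hd)) z :=
    (Prr d (lst d hd)).hasFDerivAt
  unfold Psin DPsi
  apply HasFDerivAt.prodMk
  · rw [hasFDerivAt_pi']
    intro i
    rw [ContinuousLinearMap.proj_pi]
    by_cases h : i = lst d hd
    · simp only [if_pos h, h]
      apply HasFDerivAt.sub (Pth d (lst d hd)).hasFDerivAt
      apply HasFDerivAt.const_mul
      apply HasFDerivAt.fun_sum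
      intro j hj
      exact ((hg2 j hj).comp_hasFDerivAt z hPrrL).mul
        ((Real.hasDerivAt_cos (cs d k j z)).comp_hasFDerivAt z (hcs j))
    · simp only [if_neg h]
      exact (Pth d i).hasFDerivAt
  · rw [hasFDerivAt_pi']
    intro i
    rw [ContinuousLinearMap.proj_pi]
    by_cases h : (i : ℕ) < d - 1
    · simp only [dif_pos h]
      refine HasFDerivAt.sub (Prr d i).hasFDerivAt (HasFDerivAt.fun_sum fun j hj => ?_)
      exact (((hg1 j hj).comp_hasFDerivAt z hPrrL).mul
        ((Real.hasDerivAt_sin (cs d k j z)).comp_hasFDerivAt z (hcs j))).mul_const _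
    · simp only [dif_neg h]
      exact (Prr d i).hasFDerivAt

lemma DPsi_fst_emb (d n : ℕ) (hd : 0 < d) (ω : ℝ → Fin d → ℝ) (k : ℕ → Fin (d - 1) → ℤ)
    (φ : ℕ → ℝ → ℝ) (z u : Phase d) (i' : Fin (d-1)) :
    (DPsi d n hd ω k φ z u).1 (emb d i') = u.1 (emb d i') := by
  simp [DPsi, ContinuousLinearMap.prod_apply, ContinuousLinearMap.pi_apply,
    if_neg (emb_ne_lst d hd i'), Pth]

lemma DPsi_snd_lst (d n : ℕ) (hd : 0 < d) (ω : ℝ → Fin d → ℝ) (k : ℕ → Fin (d - 1) → ℤ)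
    (φ : ℕ → ℝ → ℝ) (z u : Phase d) :
    (DPsi d n hd ω k φ z u).2 (lst d hd) = u.2 (lst d hd) := by
  have h : ¬ ((lst d hd : ℕ) < d - 1) := by simp [lst]
  simp [DPsi, ContinuousLinearMap.prod_apply, ContinuousLinearMap.pi_apply, dif_neg h, Prr]

lemma DPsi_fst_lst (d n : ℕ) (hd : 0 < d) (ω : ℝ → Fin d → ℝ) (k : ℕ → Fin (d - 1) → ℤ)
    (φ : ℕ → ℝ → ℝ) (z u : Phase d) :
    (DPsi d n hd ω k φ z u).1 (lst d hd) = u.1 (lst d hd)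
      - (∑ j ∈ Finset.Icc 2 n, 1/(2*π) * (deriv (deriv (gf d ω k φ j)) (z.2 (lst d hd))
          * Real.cos (cs d k j z))) * u.2 (lst d hd)
      + ∑ j ∈ Finset.Icc 2 n, (deriv (gf d ω k φ j) (z.2 (lst d hd)) * Real.sin (cs d k j z))
          * (∑ i', (k j i' : ℝ) * u.1 (emb d i')) := by
  have hπ := Real.pi_ne_zero
  simp only [DPsi, ContinuousLinearMap.prod_apply, ContinuousLinearMap.pi_apply,
    eq_self_iff_true, if_true, ContinuousLinearMap.sub_apply, ContinuousLinearMap.smul_apply,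
    ContinuousLinearMap.coe_sum', Finset.sum_apply, ContinuousLinearMap.add_apply]
  have hKc : ∀ j u, Kc d k j u = ∑ i', (k j i' : ℝ) * u.1 (emb d i') := by
    intro j u; simp [Kc, Pth]
  simp only [hKc, Pth, Prr, ContinuousLinearMap.comp_apply, ContinuousLinearMap.coe_fst',
    ContinuousLinearMap.coe_snd', ContinuousLinearMap.proj_apply, smul_eq_mul]
  rw [sub_add, Finset.mul_sum, Finset.sum_mul, ← Finset.sum_sub_distrib]
  congr 1
  apply Finset.sum_congr rfl
  intro j _
  field_simp
  ring

lemma DPsi_snd_emb (d n : ℕ) (hd : 0 < d) (ω : ℝ → Fin d → ℝ) (k : ℕ → Fin (d - 1) → ℤ)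
    (φ : ℕ → ℝ → ℝ) (z u : Phase d) (i' : Fin (d-1)) :
    (DPsi d n hd ω k φ z u).2 (emb d i') = u.2 (emb d i')
      - ∑ j ∈ Finset.Icc 2 n,
          ((deriv (gf d ω k φ j) (z.2 (lst d hd)) * Real.sin (cs d k j z)) * u.2 (lst d hd)
           + (2 * π * gf d ω k φ j (z.2 (lst d hd)) * Real.cos (cs d k j z))
             * (∑ i'', (k j i'' : ℝ) * u.1 (emb d i''))) * (k j i' : ℝ) := by
  have hlt : ((emb d i' : Fin d) : ℕ) < d - 1 := by simp [emb]
  have hk : ∀ j, (k j ⟨(emb d i' : Fin d), hlt⟩ : ℝ) = (k j i' : ℝ) := by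
    intro j; congr 1
  simp only [DPsi, ContinuousLinearMap.prod_apply, ContinuousLinearMap.pi_apply, dif_pos hlt,
    ContinuousLinearMap.sub_apply, ContinuousLinearMap.smul_apply, ContinuousLinearMap.coe_sum',
    Finset.sum_apply, ContinuousLinearMap.add_apply]
  have hKc : ∀ j u, Kc d k j u = ∑ i'', (k j i'' : ℝ) * u.1 (emb d i'') := by
    intro j u; simp [Kc, Pth]
  simp only [hKc, Pth, Prr, ContinuousLinearMap.comp_apply, ContinuousLinearMap.coe_fst',
    ContinuousLinearMap.coe_snd', ContinuousLinearMap.proj_apply, smul_eq_mul, hk]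
  congr 1
  apply Finset.sum_congr rfl
  intro j _
  ring

lemma Psin_snd_lst (d n : ℕ) (hd : 0 < d) (ω : ℝ → Fin d → ℝ) (k : ℕ → Fin (d - 1) → ℤ)
    (φ : ℕ → ℝ → ℝ) (z : Phase d) :
    (Psin d n hd ω k φ z).2 (lst d hd) = z.2 (lst d hd) := by
  have h : ¬ ((lst d hd : ℕ) < d - 1) := by simp [lst]
  simp [Psin, dif_neg h]

lemma Psin_snd_emb (d n : ℕ) (hd : 0 < d) (ω : ℝ → Fin d → ℝ) (k : ℕ → Fin (d - 1) → ℤ)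
    (φ : ℕ → ℝ → ℝ) (z : Phase d) (i' : Fin (d-1)) :
    (Psin d n hd ω k φ z).2 (emb d i') = z.2 (emb d i')
      - ∑ j ∈ Finset.Icc 2 n, (φ j (z.2 (lst d hd)) / Aj d ω k j (z.2 (lst d hd))) *
          Real.sin (2 * π * ∑ i'', (k j i'' : ℝ) * z.1 (emb d i'')) * (k j i' : ℝ) := by
  have hlt : ((emb d i' : Fin d) : ℕ) < d - 1 := by simp [emb]
  have hk : ∀ j, (k j ⟨(emb d i' : Fin d), hlt⟩ : ℝ) = (k j i' : ℝ) := by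
    intro j; congr 1
  simp only [Psin, dif_pos hlt, hk]

/-- Under the stated regularity and non-resonance hypotheses on an
open interval `I`, one has `H_n = H_0 ∘ Ψ_n` on `{r_d ∈ I}`, and the Jacobian of
`Ψ_n` is symplectic at every such point. -/
theorem statement14 (d n : ℕ) (hd : 2 ≤ d) (hn : 2 ≤ n)
    (ω : ℝ → Fin d → ℝ) (hω : ContDiff ℝ 2 ω)
    (k : ℕ → Fin (d - 1) → ℤ)
    (I : Set ℝ) (hIopen : IsOpen I) (hIconn : I.OrdConnected)
    (φ : ℕ → ℝ → ℝ) (hφ : ∀ j ∈ Finset.Icc 2 n, ContDiffOn ℝ 2 (φ j) I)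
    (hres : ∀ s ∈ I, ∀ j ∈ Finset.Icc 2 n, Aj d ω k j s ≠ 0) :
    (∀ z : Phase d, z.2 (lst d (by omega)) ∈ I →
      Hn d n (by omega) ω k φ z = H0 d (by omega) ω (Psin d n (by omega) ω k φ z)) ∧
    (∀ z : Phase d, z.2 (lst d (by omega)) ∈ I →
      JacobianSymplecticAt (Psin d n (by omega) ω k φ) z) := by
  have hd0 : 0 < d := by omega
  have hπ := Real.pi_ne_zero
  constructor
  · -- part (a)
    intro z hz
    unfold Hn H0
    rw [sum_split d hd0, sum_split d hd0]
    simp only [Psin_snd_emb, Psin_snd_lst]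
    have swap2 : ∑ i' : Fin (d-1), ω (z.2 (lst d hd0)) (emb d i') *
        (z.2 (emb d i') - ∑ j ∈ Finset.Icc 2 n,
          (φ j (z.2 (lst d hd0)) / Aj d ω k j (z.2 (lst d hd0))) *
            Real.sin (2 * π * ∑ i'', (k j i'' : ℝ) * z.1 (emb d i'')) * (k j i' : ℝ))
        = (∑ i' : Fin (d-1), ω (z.2 (lst d hd0)) (emb d i') * z.2 (emb d i'))
          - ∑ j ∈ Finset.Icc 2 n,
            (φ j (z.2 (lst d hd0)) / Aj d ω k j (z.2 (lst d hd0))) *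
              Real.sin (2 * π * ∑ i'', (k j i'' : ℝ) * z.1 (emb d i'')) *
                Aj d ω k j (z.2 (lst d hd0)) := by
      simp only [mul_sub, Finset.mul_sum]
      rw [Finset.sum_sub_distrib, Finset.sum_comm]
      congr 1
      apply Finset.sum_congr rfl
      intro j _
      rw [Aj, Finset.mul_sum]
      apply Finset.sum_congr rfl
      intro i' _
      ring
    rw [swap2]
    have hAj : ∀ j ∈ Finset.Icc 2 n,
        (φ j (z.2 (lst d hd0)) / Aj d ω k j (z.2 (lst d hd0))) *
          Real.sin (2 * π * ∑ i'', (k j i'' : ℝ) * z.1 (emb d i'')) *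
            Aj d ω k j (z.2 (lst d hd0))
        = φ j (z.2 (lst d hd0)) *
            Real.sin (2 * π * ∑ i'', (k j i'' : ℝ) * z.1 (emb d i'')) := by
      intro j hj
      have hA := hres _ hz j hj
      field_simp
    rw [Finset.sum_congr rfl hAj]
    ring
  · -- part (b)
    intro z hz u v
    have h := hasFDerivAt_Psin d n hd0 ω hω k I hIopen φ hφ hres z hz
    rw [h.fderiv]
    unfold SymplForm
    rw [sum_split d hd0, sum_split d hd0]
    simp only [DPsi_fst_emb, DPsi_fst_lst, DPsi_snd_emb, DPsi_snd_lst]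
    exact key_alg (d-1) (Finset.Icc 2 n) (fun j i' => (k j i' : ℝ))
      (fun j => deriv (gf d ω k φ j) (z.2 (lst d hd0)) * Real.sin (cs d k j z))
      (fun j => 2 * π * gf d ω k φ j (z.2 (lst d hd0)) * Real.cos (cs d k j z))
      (fun j => 1/(2*π) * (deriv (deriv (gf d ω k φ j)) (z.2 (lst d hd0)) * Real.cos (cs d k j z)))
      (fun i' => u.1 (emb d i')) (fun i' => u.2 (emb d i'))
      (fun i' => v.1 (emb d i')) (fun i' => v.2 (emb d i'))
      (u.1 (lst d hd0)) (u.2 (lst d hd0)) (v.1 (lst d hd0)) (v.2 (lst d hd0))
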